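/- Let A be a Noetherian integrally closed domain with fraction field F, let M be an A-module, let m be a positive integer, let s : M × ⋯ × M → A (m factors) be an m-multilinear A-linear map, let t : M → A be an A-linear map, and let ρ ∈ F be an element such that for all x₁, …, x_m ∈ M one has s(x₁, …, x_m) = ρ · t(x₁) ⋯ t(x_m) as elements of F. Then there exists a field extension L of F generated over F by a single element z with z^m = ρ (in particular [L : F] ≤ m), such that, writing B for the integral closure of A in L, there is an A-linear map t̄ : M → B satisfying t̄(x₁) ⋯ t̄(x_m) = s(x₁, …, x_m) (viewing s(x₁, …, x_m) ∈ A ⊆ B) for all x₁, …, x_m ∈ M. (One may take t̄(x) = z · t(x).) -/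

import Mathlib

universe uA uF uM

/-- **Extracting an `m`-th root of a tensor-power Pfaff field after a finite cover**
(affine, module-theoretic form).

Let `A` be a Noetherian integrally closed domain with fraction field `F`, `M` an `A`-module,
`m > 0`, `s : M^m → A` an `m`-multilinear `A`-linear map, `t : M → A` an `A`-linear map and
`ρ ∈ F` with `s(x₁, …, x_m) = ρ · t(x₁) ⋯ t(x_m)` in `F` for all `xᵢ ∈ M`.  Then there is a
field extension `L` of `F` generated over `F` by a single element `z` with `z^m = ρ` (in
particular `[L : F] ≤ m`) such that, with `B` the integral closure of `A` in `L`, there is an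
`A`-linear map `t̄ : M → B` (encoded as a map `M → L` whose values are integral over `A`,
additive and compatible with the `A`-action through `A → F → L`) satisfying
`t̄(x₁) ⋯ t̄(x_m) = s(x₁, …, x_m)` in `L` for all `xᵢ ∈ M`. -/
theorem mth_root_of_tensor_power_pfaff
    (A : Type uA) [CommRing A] [IsDomain A] [IsNoetherianRing A] [IsIntegrallyClosed A]
    (F : Type uF) [Field F] [Algebra A F] [IsFractionRing A F]
    (M : Type uM) [AddCommGroup M] [Module A M]
    (m : ℕ) (hm : 0 < m)
    (s : MultilinearMap A (fun _ : Fin m => M) A)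
    (t : M →ₗ[A] A)
    (ρ : F)
    (hst : ∀ x : Fin m → M,
      algebraMap A F (s x) = ρ * ∏ i, algebraMap A F (t (x i))) :
    ∃ (L : Type uF) (_ : Field L) (_ : Algebra F L) (z : L),
      z ^ m = algebraMap F L ρ ∧
      Algebra.adjoin F {z} = ⊤ ∧
      Module.rank F L ≤ m ∧
      ∃ tbar : M → L,
        (∀ x : M, ∃ P : Polynomial A, P.Monic ∧
          Polynomial.eval₂ ((algebraMap F L).comp (algebraMap A F)) (tbar x) P = 0) ∧
        (∀ x y : M, tbar (x + y) = tbar x + tbar y) ∧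
        (∀ (a : A) (x : M),
          tbar (a • x) = ((algebraMap F L).comp (algebraMap A F)) a * tbar x) ∧
        (∀ x : Fin m → M,
          (∏ i, tbar (x i))
            = ((algebraMap F L).comp (algebraMap A F)) (s x)) := by
  classical
  set p : Polynomial F := Polynomial.X ^ m - Polynomial.C ρ with hp
  have hpdeg : p.natDegree = m := Polynomial.natDegree_X_pow_sub_C
  have hp0 : p ≠ 0 := by
    intro h
    rw [h] at hpdeg
    simp at hpdeg
    omega
  have hpu : ¬ IsUnit p := by
    intro h
    have := Polynomial.natDegree_eq_zero_of_isUnit h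
    omega
  obtain ⟨f, hfirr, hfdvd⟩ := WfDvdMonoid.exists_irreducible_factor hpu hp0
  have : Fact (Irreducible f) := ⟨hfirr⟩
  have hf0 : f ≠ 0 := hfirr.ne_zero
  set L := AdjoinRoot f
  set z : L := AdjoinRoot.root f with hz
  have hzm : z ^ m = algebraMap F L ρ := by
    obtain ⟨q, hq⟩ := hfdvd
    have h0 : Polynomial.aeval z p = 0 := by
      rw [hq, map_mul, AdjoinRoot.aeval_eq, AdjoinRoot.mk_self, zero_mul]
    have h1 : z ^ m - algebraMap F L ρ = 0 := by
      simpa [hp, Polynomial.aeval_def] using h0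
    exact sub_eq_zero.mp h1
  refine ⟨L, inferInstance, inferInstance, z, hzm, AdjoinRoot.adjoinRoot_eq_top, ?_, ?_⟩
  · have hrank : Module.rank F L = f.natDegree := by
      rw [rank_eq_card_basis (AdjoinRoot.powerBasis hf0).basis]
      simp [AdjoinRoot.powerBasis]
      exact_mod_cast Fintype.card_fin _
    rw [hrank]
    have : f.natDegree ≤ m := hpdeg ▸ Polynomial.natDegree_le_of_dvd hfdvd hp0
    exact_mod_cast Nat.cast_le.mpr this
  · set φ : A →+* L := ((algebraMap F L).comp (algebraMap A F)) with hφ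
    refine ⟨fun x => z * φ (t x), ?_, ?_, ?_, ?_⟩
    · intro x
      refine ⟨Polynomial.X ^ m - Polynomial.C (s (fun _ => x)), ?_, ?_⟩
      · exact Polynomial.monic_X_pow_sub_C _ hm.ne'
      · have key : (z * φ (t x)) ^ m = φ (s (fun _ => x)) := by
          have h := hst (fun _ => x)
          rw [show φ (s fun _ => x) = algebraMap F L (algebraMap A F (s fun _ => x)) from rfl,
            h, map_mul, map_prod]
          simp only [Finset.prod_const, Finset.card_univ, Fintype.card_fin]
          rw [mul_pow, hzm]
          rfl
        simp [Polynomial.eval₂_sub, Polynomial.eval₂_pow, key]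
    · intro x y
      show z * φ (t (x + y)) = z * φ (t x) + z * φ (t y)
      rw [map_add, map_add, mul_add]
    · intro a x
      show z * φ (t (a • x)) = φ a * (z * φ (t x))
      rw [map_smul, smul_eq_mul, map_mul]
      ring
    · intro x
      have : (∏ i, z * φ (t (x i))) = z ^ m * ∏ i, φ (t (x i)) := by
        rw [Finset.prod_mul_distrib, Finset.prod_const, Finset.card_univ, Fintype.card_fin]
      rw [this, hzm]
      have h2 := hst x
      rw [hφ]
      simp only [RingHom.comp_apply]
      rw [h2, map_mul, map_prod]
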